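/- Under the spectral hypotheses, if V = ⊕_{i=1}^ℓ W_i is a direct sum of subspaces with W_i ⊆ 𝒲_k^i for each i (i.e. V is a trace space at time k), then 𝒫_{k,i}(Q_{k,i}^s V) = W_i for every i = 1,…,ℓ, and hence 𝒯_k(V) = V. Consequently the set 𝒟_k(s,d) of s-dimensional trace spaces at time k equals { 𝒯_k(V) : V ∈ 𝒢(s,d) }. -/

import Mathlib

open Filter

noncomputable section

abbrev Euc (d : ℕ) := EuclideanSpace ℝ (Fin d)

/-- Angle between the lines spanned by two vectors. -/
noncomputable def vecAngle {d : ℕ} (v w : Euc d) : ℝ :=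
  Real.arccos (|(inner ℝ v w : ℝ)| / (‖v‖ * ‖w‖))

/-- Largest principal angle between two subspaces of equal dimension. -/
noncomputable def subAngle {d : ℕ} (V W : Submodule ℝ (Euc d)) : ℝ :=
  Real.arccos (sInf {c : ℝ | ∃ v ∈ V, ‖v‖ = 1 ∧
    c = sSup {r : ℝ | ∃ w ∈ W, ‖w‖ = 1 ∧ r = (inner ℝ v w : ℝ)}})

/-- Forward product `A (m+n-1) ⋯ A m`. -/
noncomputable def PhiF {d : ℕ} (A : ℕ → (Euc d →L[ℝ] Euc d)) (m : ℕ) : ℕ → (Euc d →L[ℝ] Euc d)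
  | 0 => 1
  | n + 1 => A (m + n) ∘L PhiF A m n

/-- Solution operator `Φ(n,m) = A_{n-1} ⋯ A_m` for `n ≥ m`,
`Φ(n,m) = A_n⁻¹ ⋯ A_{m-1}⁻¹` for `n < m`. -/
noncomputable def Phi {d : ℕ} (A : ℕ → (Euc d →L[ℝ] Euc d)) (n m : ℕ) : Euc d →L[ℝ] Euc d :=
  if m ≤ n then PhiF A m (n - m) else Ring.inverse (PhiF A n (m - n))

/-- `a_{m,n}(V) = Σ_{j=m}^n ∠(Φ(j-1,0)V, Φ(j,0)V)`. -/
noncomputable def angSum {d : ℕ} (A : ℕ → (Euc d →L[ℝ] Euc d)) (V : Submodule ℝ (Euc d))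
    (m n : ℕ) : ℝ :=
  ∑ j ∈ Finset.Icc m n, subAngle (V.map (Phi A (j - 1) 0 : Euc d →ₗ[ℝ] Euc d)) (V.map (Phi A j 0 : Euc d →ₗ[ℝ] Euc d))

/-- Fiber projector `𝒫_{k,i} = P_{k,i}^s − P_{k,i+1}^s`. -/
noncomputable def fiberP {d : ℕ} (P : ℕ → ℕ → (Euc d →L[ℝ] Euc d)) (k i : ℕ) :
    Euc d →L[ℝ] Euc d :=
  P k i - P k (i + 1)

/-- The spectral fiber `𝒲_k^i = range 𝒫_{k,i}`. -/
noncomputable def fiberW {d : ℕ} (P : ℕ → ℕ → (Euc d →L[ℝ] Euc d)) (k i : ℕ) :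
    Submodule ℝ (Euc d) :=
  LinearMap.range (fiberP P k i : Euc d →ₗ[ℝ] Euc d)

/-- The trace space `𝒯_k(V) = Σ_{i=1}^ℓ 𝒫_{k,i}(Q_{k,i}^s V)`, where
`Q_{k,i}^s V = range(P_{k,i}^s) ∩ V`. -/
noncomputable def traceSpace {d : ℕ} (P : ℕ → ℕ → (Euc d →L[ℝ] Euc d)) (ℓ k : ℕ)
    (V : Submodule ℝ (Euc d)) : Submodule ℝ (Euc d) :=
  ⨆ i ∈ Finset.Icc 1 ℓ, (LinearMap.range (P k i : Euc d →ₗ[ℝ] Euc d) ⊓ V).map (fiberP P k i : Euc d →ₗ[ℝ] Euc d)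

/-- `V` is a trace space at time `k`: a (direct) sum of subspaces of the fibers. -/
def IsTraceAt {d : ℕ} (P : ℕ → ℕ → (Euc d →L[ℝ] Euc d)) (ℓ k : ℕ)
    (V : Submodule ℝ (Euc d)) : Prop :=
  ∃ W : ℕ → Submodule ℝ (Euc d),
    (∀ i, 1 ≤ i → i ≤ ℓ → W i ≤ fiberW P k i) ∧ V = ⨆ i ∈ Finset.Icc 1 ℓ, W i

namespace TraceAux

variable {d : ℕ}

private lemma proj_fix (Q : Euc d →L[ℝ] Euc d) (h : Q ∘L Q = Q) {x : Euc d}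
    (hx : x ∈ LinearMap.range (Q : Euc d →ₗ[ℝ] Euc d)) : Q x = x := by
  obtain ⟨y, rfl⟩ := hx
  have := congrArg (fun g : Euc d →L[ℝ] Euc d => g y) h
  simpa using this

private lemma range_chain (ℓ : ℕ) (Q : ℕ → (Euc d →L[ℝ] Euc d))
    (hrange : ∀ i, 1 ≤ i → i ≤ ℓ → LinearMap.range (Q (i + 1) : Euc d →ₗ[ℝ] Euc d) ≤ LinearMap.range (Q i : Euc d →ₗ[ℝ] Euc d)) :
    ∀ a b, 1 ≤ a → a ≤ b → b ≤ ℓ + 1 →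
      LinearMap.range (Q b : Euc d →ₗ[ℝ] Euc d) ≤ LinearMap.range (Q a : Euc d →ₗ[ℝ] Euc d) := by
  intro a b ha hab
  induction b, hab using Nat.le_induction with
  | base => exact fun _ => le_rfl
  | succ b hab ih =>
    intro hb
    exact (hrange b (ha.trans hab) (by omega)).trans (ih (by omega))

private lemma ker_chain (ℓ : ℕ) (Q : ℕ → (Euc d →L[ℝ] Euc d))
    (hker : ∀ i, 1 ≤ i → i ≤ ℓ → LinearMap.ker (Q i : Euc d →ₗ[ℝ] Euc d) ≤ LinearMap.ker (Q (i + 1) : Euc d →ₗ[ℝ] Euc d)) :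
    ∀ a b, 1 ≤ a → a ≤ b → b ≤ ℓ + 1 →
      LinearMap.ker (Q a : Euc d →ₗ[ℝ] Euc d) ≤ LinearMap.ker (Q b : Euc d →ₗ[ℝ] Euc d) := by
  intro a b ha hab
  induction b, hab using Nat.le_induction with
  | base => exact fun _ => le_rfl
  | succ b hab ih =>
    intro hb
    exact (ih (by omega)).trans (hker b (ha.trans hab) (by omega))

private lemma lcomp (ℓ : ℕ) (Q : ℕ → (Euc d →L[ℝ] Euc d))
    (hproj : ∀ i, 1 ≤ i → i ≤ ℓ + 1 → Q i ∘L Q i = Q i)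
    (hrange : ∀ i, 1 ≤ i → i ≤ ℓ → LinearMap.range (Q (i + 1) : Euc d →ₗ[ℝ] Euc d) ≤ LinearMap.range (Q i : Euc d →ₗ[ℝ] Euc d)) :
    ∀ a b, 1 ≤ a → a ≤ b → b ≤ ℓ + 1 → ∀ x, Q a (Q b x) = Q b x := by
  intro a b ha hab hb x
  exact proj_fix (Q a) (hproj a ha (by omega))
    (range_chain ℓ Q hrange a b ha hab hb ⟨x, rfl⟩)

private lemma rcomp (ℓ : ℕ) (Q : ℕ → (Euc d →L[ℝ] Euc d))
    (hproj : ∀ i, 1 ≤ i → i ≤ ℓ + 1 → Q i ∘L Q i = Q i)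
    (hker : ∀ i, 1 ≤ i → i ≤ ℓ → LinearMap.ker (Q i : Euc d →ₗ[ℝ] Euc d) ≤ LinearMap.ker (Q (i + 1) : Euc d →ₗ[ℝ] Euc d)) :
    ∀ a b, 1 ≤ a → a ≤ b → b ≤ ℓ + 1 → ∀ x, Q b (Q a x) = Q b x := by
  intro a b ha hab hb x
  have h1 : Q a (Q a x) = Q a x := by
    have := congrArg (fun g : Euc d →L[ℝ] Euc d => g x) (hproj a ha (by omega))
    simpa using this
  have h2 : x - Q a x ∈ LinearMap.ker (Q a : Euc d →ₗ[ℝ] Euc d) := by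
    simp [LinearMap.mem_ker, map_sub, h1]
  have h3 : Q b (x - Q a x) = 0 := ker_chain ℓ Q hker a b ha hab hb h2
  rw [map_sub, sub_eq_zero] at h3
  exact h3.symm

variable (ℓ k : ℕ) (P : ℕ → ℕ → (Euc d →L[ℝ] Euc d))

/-- `P k a` fixes the fiber `𝒲_j` for `a ≤ j`. -/
private lemma fact3
    (hproj : ∀ i, 1 ≤ i → i ≤ ℓ + 1 → P k i ∘L P k i = P k i)
    (hrange : ∀ i, 1 ≤ i → i ≤ ℓ → LinearMap.range (P k (i + 1) : Euc d →ₗ[ℝ] Euc d) ≤ LinearMap.range (P k i : Euc d →ₗ[ℝ] Euc d))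
    {a j : ℕ} (ha : 1 ≤ a) (haj : a ≤ j) (hj : j ≤ ℓ) :
    ∀ x ∈ fiberW P k j, P k a x = x := by
  rintro x ⟨y, rfl⟩
  have hx : fiberP P k j y = P k j y - P k (j + 1) y := by simp [fiberP]
  rw [ContinuousLinearMap.coe_coe, hx, map_sub,
    lcomp ℓ (P k) hproj hrange a j ha haj (by omega) y,
    lcomp ℓ (P k) hproj hrange a (j + 1) ha (by omega) (by omega) y]

/-- `P k a` kills the fiber `𝒲_j` for `j < a`. -/
private lemma fact4
    (hproj : ∀ i, 1 ≤ i → i ≤ ℓ + 1 → P k i ∘L P k i = P k i)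
    (hker : ∀ i, 1 ≤ i → i ≤ ℓ → LinearMap.ker (P k i : Euc d →ₗ[ℝ] Euc d) ≤ LinearMap.ker (P k (i + 1) : Euc d →ₗ[ℝ] Euc d))
    {a j : ℕ} (hj : 1 ≤ j) (hja : j < a) (ha : a ≤ ℓ + 1) :
    ∀ x ∈ fiberW P k j, P k a x = 0 := by
  rintro x ⟨y, rfl⟩
  have hx : fiberP P k j y = P k j y - P k (j + 1) y := by simp [fiberP]
  rw [ContinuousLinearMap.coe_coe, hx, map_sub,
    rcomp ℓ (P k) hproj hker j a hj (by omega) ha y,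
    rcomp ℓ (P k) hproj hker (j + 1) a (by omega) (by omega) ha y, sub_self]

variable (hproj : ∀ i, 1 ≤ i → i ≤ ℓ + 1 → P k i ∘L P k i = P k i)
  (hrange : ∀ i, 1 ≤ i → i ≤ ℓ → LinearMap.range (P k (i + 1) : Euc d →ₗ[ℝ] Euc d) ≤ LinearMap.range (P k i : Euc d →ₗ[ℝ] Euc d))
  (hker : ∀ i, 1 ≤ i → i ≤ ℓ → LinearMap.ker (P k i : Euc d →ₗ[ℝ] Euc d) ≤ LinearMap.ker (P k (i + 1) : Euc d →ₗ[ℝ] Euc d))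

include hproj hrange hker

/-- `𝒫_i` fixes `𝒲_i`. -/
private lemma fact1 {i : ℕ} (hi : 1 ≤ i) (hil : i ≤ ℓ) :
    ∀ x ∈ fiberW P k i, fiberP P k i x = x := by
  intro x hx
  have h1 : P k i x = x := fact3 ℓ k P hproj hrange hi le_rfl hil x hx
  have h2 : P k (i + 1) x = 0 := fact4 ℓ k P hproj hker hi (by omega) (by omega) x hx
  simp [fiberP, h1, h2]

/-- `𝒫_i` kills `𝒲_j` for `j ≠ i`. -/
private lemma fact2 {i j : ℕ} (hi : 1 ≤ i) (hil : i ≤ ℓ) (hj : 1 ≤ j) (hjl : j ≤ ℓ)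
    (hij : i ≠ j) : ∀ x ∈ fiberW P k j, fiberP P k i x = 0 := by
  intro x hx
  rcases lt_or_gt_of_ne hij with h | h
  · have h1 : P k i x = x := fact3 ℓ k P hproj hrange hi (by omega) hjl x hx
    have h2 : P k (i + 1) x = x := fact3 ℓ k P hproj hrange (by omega) (by omega) hjl x hx
    simp [fiberP, h1, h2]
  · have h1 : P k i x = 0 := fact4 ℓ k P hproj hker hj h (by omega) x hx
    have h2 : P k (i + 1) x = 0 := fact4 ℓ k P hproj hker hj (by omega) (by omega) x hx
    simp [fiberP, h1, h2]

/-- `𝒲_j ≤ range (P k a)` for `a ≤ j`. -/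
private lemma fiberW_le_range {a j : ℕ} (ha : 1 ≤ a) (haj : a ≤ j) (hj : j ≤ ℓ) :
    fiberW P k j ≤ LinearMap.range (P k a : Euc d →ₗ[ℝ] Euc d) := by
  intro x hx
  exact ⟨x, fact3 ℓ k P hproj hrange ha haj hj x hx⟩

/-- Part 1: on a trace space, `𝒫_i (range (P k i) ⊓ V) = W i`. -/
private lemma master (V : Submodule ℝ (Euc d)) (W : ℕ → Submodule ℝ (Euc d))
    (hW : ∀ i, 1 ≤ i → i ≤ ℓ → W i ≤ fiberW P k i)
    (hVW : V = ⨆ i ∈ Finset.Icc 1 ℓ, W i) :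
    ∀ i, 1 ≤ i → i ≤ ℓ →
      (LinearMap.range (P k i : Euc d →ₗ[ℝ] Euc d) ⊓ V).map (fiberP P k i : Euc d →ₗ[ℝ] Euc d) = W i := by
  intro i hi1 hil
  have hWV : ∀ j, 1 ≤ j → j ≤ ℓ → W j ≤ V := by
    intro j hj1 hjl
    rw [hVW]
    exact le_iSup₂ (f := fun j _ => W j) j (Finset.mem_Icc.mpr ⟨hj1, hjl⟩)
  have hinf : LinearMap.range (P k i : Euc d →ₗ[ℝ] Euc d) ⊓ V = ⨆ j ∈ Finset.Icc i ℓ, W j := by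
    apply le_antisymm
    · have hmap : V.map (P k i : Euc d →ₗ[ℝ] Euc d) ≤ ⨆ j ∈ Finset.Icc i ℓ, W j := by
        rw [hVW]
        simp only [Submodule.map_iSup]
        refine iSup₂_le fun j hj => ?_
        rw [Finset.mem_Icc] at hj
        by_cases hij : i ≤ j
        · refine le_trans ?_
            (le_iSup₂ (f := fun j _ => W j) j (Finset.mem_Icc.mpr ⟨hij, hj.2⟩))
          rintro x ⟨w, hw, rfl⟩
          rw [ContinuousLinearMap.coe_coe, fact3 ℓ k P hproj hrange hi1 hij hj.2 w (hW j hj.1 hj.2 hw)]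
          exact hw
        · rintro x ⟨w, hw, rfl⟩
          rw [ContinuousLinearMap.coe_coe, fact4 ℓ k P hproj hker hj.1 (by omega) (by omega) w (hW j hj.1 hj.2 hw)]
          exact Submodule.zero_mem _
      intro x hx
      have hfix : P k i x = x := proj_fix (P k i) (hproj i hi1 (by omega)) hx.1
      exact hmap ⟨x, hx.2, hfix⟩
    · refine iSup₂_le fun j hj => ?_
      rw [Finset.mem_Icc] at hj
      exact le_inf ((hW j (by omega) hj.2).trans
          (fiberW_le_range ℓ k P hproj hrange hker hi1 hj.1 hj.2))
        (hWV j (by omega) hj.2)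
  rw [hinf]
  simp only [Submodule.map_iSup]
  apply le_antisymm
  · refine iSup₂_le fun j hj => ?_
    rw [Finset.mem_Icc] at hj
    rcases eq_or_ne i j with rfl | hij
    · rintro x ⟨w, hw, rfl⟩
      rw [ContinuousLinearMap.coe_coe, fact1 ℓ k P hproj hrange hker hi1 hil w (hW i hi1 hil hw)]
      exact hw
    · rintro x ⟨w, hw, rfl⟩
      rw [ContinuousLinearMap.coe_coe, fact2 ℓ k P hproj hrange hker hi1 hil (by omega) hj.2 hij w
        (hW j (by omega) hj.2 hw)]
      exact Submodule.zero_mem _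
  · refine le_trans ?_ (le_iSup₂ (f := fun j _ => (W j).map (fiberP P k i : Euc d →ₗ[ℝ] Euc d)) i
      (Finset.mem_Icc.mpr ⟨le_rfl, hil⟩))
    intro w hw
    exact ⟨w, hw, fact1 ℓ k P hproj hrange hker hi1 hil w (hW i hi1 hil hw)⟩

/-- Part 2: `𝒯_k(V) = V` for a trace space. -/
private lemma master2 (V : Submodule ℝ (Euc d)) (W : ℕ → Submodule ℝ (Euc d))
    (hW : ∀ i, 1 ≤ i → i ≤ ℓ → W i ≤ fiberW P k i)
    (hVW : V = ⨆ i ∈ Finset.Icc 1 ℓ, W i) :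
    traceSpace P ℓ k V = V := by
  have h := master ℓ k P hproj hrange hker V W hW hVW
  refine (biSup_congr fun i hi => ?_).trans hVW.symm
  rw [Finset.mem_Icc] at hi
  exact h i hi.1 hi.2

/-- The trace space has the same dimension as `V`. -/
private lemma dimlem (hℓ : 1 ≤ ℓ)
    (hP1 : P k 1 = 1) (hPl : P k (ℓ + 1) = 0) (V : Submodule ℝ (Euc d)) :
    Module.finrank ℝ (traceSpace P ℓ k V) = Module.finrank ℝ V := by
  set piece : ℕ → Submodule ℝ (Euc d) :=
    fun i => (LinearMap.range (P k i : Euc d →ₗ[ℝ] Euc d) ⊓ V).map (fiberP P k i : Euc d →ₗ[ℝ] Euc d) with hpiece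
  have key : ∀ n i, 1 ≤ i → i + n = ℓ + 1 →
      Module.finrank ℝ ↥(⨆ j ∈ Finset.Icc i ℓ, piece j) =
      Module.finrank ℝ ↥(LinearMap.range (P k i : Euc d →ₗ[ℝ] Euc d) ⊓ V) := by
    intro n
    induction n with
    | zero =>
      intro i hi1 hi
      have hi' : i = ℓ + 1 := by omega
      subst hi'
      have h1 : (⨆ j ∈ Finset.Icc (ℓ + 1) ℓ, piece j) = ⊥ := by
        refine le_bot_iff.mp (iSup₂_le fun j hj => ?_)
        rw [Finset.mem_Icc] at hj
        omega
      have h2 : LinearMap.range (P k (ℓ + 1) : Euc d →ₗ[ℝ] Euc d) ⊓ V = ⊥ := by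
        rw [hPl]
        have hz : LinearMap.range ((0 : Euc d →L[ℝ] Euc d) : Euc d →ₗ[ℝ] Euc d) ≤ ⊥ := by
          rintro x ⟨y, rfl⟩
          simp
        rw [le_bot_iff.mp hz, bot_inf_eq]
      rw [h1, h2]
    | succ n ih =>
      intro i hi1 hi
      have hil : i ≤ ℓ := by omega
      have hins : Finset.Icc i ℓ = insert i (Finset.Icc (i + 1) ℓ) := by
        ext x
        simp only [Finset.mem_Icc, Finset.mem_insert]
        omega
      rw [hins, Finset.iSup_insert]
      have hih := ih (i + 1) (by omega) (by omega)
      -- disjointness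
      have hSle : (⨆ j ∈ Finset.Icc (i + 1) ℓ, piece j) ≤ LinearMap.range (P k (i + 1) : Euc d →ₗ[ℝ] Euc d) := by
        refine iSup₂_le fun j hj => ?_
        rw [Finset.mem_Icc] at hj
        refine le_trans ?_ (fiberW_le_range ℓ k P hproj hrange hker (by omega) hj.1 hj.2)
        rintro x ⟨w, hw, rfl⟩
        exact ⟨w, rfl⟩
      have hple : piece i ≤ fiberW P k i := by
        rintro x ⟨w, hw, rfl⟩
        exact ⟨w, rfl⟩
      have hdisj : piece i ⊓ (⨆ j ∈ Finset.Icc (i + 1) ℓ, piece j) = ⊥ := by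
        refine le_bot_iff.mp ?_
        intro x hx
        have hx1 : x ∈ fiberW P k i := hple hx.1
        have hx2 : x ∈ LinearMap.range (P k (i + 1) : Euc d →ₗ[ℝ] Euc d) := hSle hx.2
        have h0 : P k (i + 1) x = x := proj_fix (P k (i + 1))
          (hproj (i + 1) (by omega) (by omega)) hx2
        have h1 : P k (i + 1) x = 0 :=
          fact4 ℓ k P hproj hker hi1 (by omega) (by omega) x hx1
        have : x = 0 := by rw [← h0, h1]
        simp [this]
      have hrank := Submodule.finrank_sup_add_finrank_inf_eq (piece i)
        (⨆ j ∈ Finset.Icc (i + 1) ℓ, piece j)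
      rw [hdisj] at hrank
      -- rank-nullity for piece i
      have hD1 : Module.finrank ℝ ↥(piece i) +
          Module.finrank ℝ ↥(LinearMap.range (P k (i + 1) : Euc d →ₗ[ℝ] Euc d) ⊓ V) =
          Module.finrank ℝ ↥(LinearMap.range (P k i : Euc d →ₗ[ℝ] Euc d) ⊓ V) := by
        set S₀ := LinearMap.range (P k i : Euc d →ₗ[ℝ] Euc d) ⊓ V with hS₀
        set f : ↥S₀ →ₗ[ℝ] Euc d :=
          ((fiberP P k i : Euc d →L[ℝ] Euc d) : Euc d →ₗ[ℝ] Euc d).domRestrict S₀ with hf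
        have hrn := LinearMap.finrank_range_add_finrank_ker f
        have hrangef : LinearMap.range f = piece i := by
          rw [hf, LinearMap.range_domRestrict]
        have hle : LinearMap.range (P k (i + 1) : Euc d →ₗ[ℝ] Euc d) ⊓ V ≤ S₀ :=
          inf_le_inf_right V (hrange i hi1 hil)
        have hkerf : LinearMap.ker f =
            (LinearMap.range (P k (i + 1) : Euc d →ₗ[ℝ] Euc d) ⊓ V).comap S₀.subtype := by
          ext x
          simp only [LinearMap.mem_ker, Submodule.mem_comap, Submodule.coe_subtype,
            Submodule.mem_inf, hf, LinearMap.domRestrict_apply, ContinuousLinearMap.coe_coe]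
          have hxfix : P k i (x : Euc d) = (x : Euc d) :=
            proj_fix (P k i) (hproj i hi1 (by omega)) x.2.1
          constructor
          · intro h0
            have : fiberP P k i (x : Euc d) = P k i (x : Euc d) - P k (i + 1) (x : Euc d) := by
              simp [fiberP]
            rw [this, hxfix, sub_eq_zero] at h0
            exact ⟨⟨(x : Euc d), h0.symm⟩, x.2.2⟩
          · rintro ⟨hx1, _⟩
            have hfix1 : P k (i + 1) (x : Euc d) = (x : Euc d) :=
              proj_fix (P k (i + 1)) (hproj (i + 1) (by omega) (by omega)) hx1
            have : fiberP P k i (x : Euc d) = P k i (x : Euc d) - P k (i + 1) (x : Euc d) := by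
              simp [fiberP]
            rw [this, hxfix, hfix1, sub_self]
        have hkerrank : Module.finrank ℝ ↥(LinearMap.ker f) =
            Module.finrank ℝ ↥(LinearMap.range (P k (i + 1) : Euc d →ₗ[ℝ] Euc d) ⊓ V) := by
          rw [hkerf]
          exact LinearEquiv.finrank_eq (Submodule.comapSubtypeEquivOfLe hle)
        rw [hrangef, hkerrank] at hrn
        exact hrn
      have hbot : Module.finrank ℝ ↥(⊥ : Submodule ℝ (Euc d)) = 0 := finrank_bot ℝ (Euc d)
      omega
  have hfinal := key ℓ 1 le_rfl (by omega)
  have htop : LinearMap.range (P k 1 : Euc d →ₗ[ℝ] Euc d) ⊓ V = V := by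
    rw [hP1]
    exact inf_eq_right.mpr fun x _ => ⟨x, rfl⟩
  rw [htop] at hfinal
  exact hfinal

end TraceAux

/-- Under the spectral hypotheses, if `V = ⊕_{i=1}^ℓ W_i` with
`W_i ⊆ 𝒲_k^i`, then `𝒫_{k,i}(Q_{k,i}^s V) = W_i` for every `i` and `𝒯_k(V) = V`;
consequently the set of `s`-dimensional trace spaces at time `k` equals
`{𝒯_k(V) : V ∈ 𝒢(s,d)}`. -/
theorem traceSpace_of_traceSpace
    {d : ℕ} (A : ℕ → (Euc d →L[ℝ] Euc d)) (hA : ∀ n, IsUnit (A n))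
    (hbd : ∃ Cb : ℝ, ∀ n, ‖A n‖ + ‖Ring.inverse (A n)‖ ≤ Cb)
    (ℓ : ℕ) (hℓ : 1 ≤ ℓ) (K : ℝ) (hK : 1 ≤ K)
    (σm σp : ℕ → ℝ)
    (hσ0 : ∀ i, 1 ≤ i → i ≤ ℓ → 0 < σm i)
    (hσ1 : ∀ i, 1 ≤ i → i ≤ ℓ → σm i ≤ σp i)
    (hσ2 : ∀ i, 1 ≤ i → i < ℓ → σp (i + 1) < σm i)
    (P : ℕ → ℕ → (Euc d →L[ℝ] Euc d))
    (hproj : ∀ n i, 1 ≤ i → i ≤ ℓ + 1 → P n i ∘L P n i = P n i)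
    (hP1 : ∀ n, P n 1 = 1)
    (hPl : ∀ n, P n (ℓ + 1) = 0)
    (hcomm : ∀ n m i, 1 ≤ i → i ≤ ℓ + 1 → P n i ∘L Phi A n m = Phi A n m ∘L P m i)
    (hrange : ∀ n i, 1 ≤ i → i ≤ ℓ → LinearMap.range (P n (i + 1) : Euc d →ₗ[ℝ] Euc d) ≤ LinearMap.range (P n i : Euc d →ₗ[ℝ] Euc d))
    (hker : ∀ n i, 1 ≤ i → i ≤ ℓ → LinearMap.ker (P n i : Euc d →ₗ[ℝ] Euc d) ≤ LinearMap.ker (P n (i + 1) : Euc d →ₗ[ℝ] Euc d))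
    (hbndS : ∀ i, 1 ≤ i → i ≤ ℓ → ∀ n m : ℕ, m ≤ n →
      ‖Phi A n m ∘L P m (i + 1)‖ ≤ K * (if i = ℓ then (0 : ℝ) else σp (i + 1)) ^ (n - m))
    (hbndU : ∀ i, 1 ≤ i → i ≤ ℓ → ∀ n m : ℕ, m ≤ n →
      ‖Phi A m n ∘L (1 - P n (i + 1))‖ ≤ K * (σm i ^ (n - m))⁻¹)
    (k : ℕ) (V : Submodule ℝ (Euc d)) (W : ℕ → Submodule ℝ (Euc d))
    (hW : ∀ i, 1 ≤ i → i ≤ ℓ → W i ≤ fiberW P k i)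
    (hVW : V = ⨆ i ∈ Finset.Icc 1 ℓ, W i) :
    (∀ i, 1 ≤ i → i ≤ ℓ →
      (LinearMap.range (P k i : Euc d →ₗ[ℝ] Euc d) ⊓ V).map (fiberP P k i : Euc d →ₗ[ℝ] Euc d) = W i) ∧
    traceSpace P ℓ k V = V ∧
    ∀ s : ℕ,
      {U : Submodule ℝ (Euc d) | IsTraceAt P ℓ k U ∧ Module.finrank ℝ U = s} =
      {U : Submodule ℝ (Euc d) | ∃ V' : Submodule ℝ (Euc d),
        Module.finrank ℝ V' = s ∧ U = traceSpace P ℓ k V'} := by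
  have hproj' := fun i => hproj k i
  have hrange' := fun i => hrange k i
  have hker' := fun i => hker k i
  refine ⟨TraceAux.master ℓ k P hproj' hrange' hker' V W hW hVW,
    TraceAux.master2 ℓ k P hproj' hrange' hker' V W hW hVW, fun s => ?_⟩
  ext U
  simp only [Set.mem_setOf_eq]
  constructor
  · rintro ⟨⟨W', hW', hUW'⟩, hdim⟩
    exact ⟨U, hdim,
      (TraceAux.master2 ℓ k P hproj' hrange' hker' U W' hW' hUW').symm⟩
  · rintro ⟨V', hdim, rfl⟩
    refine ⟨⟨fun i => (LinearMap.range (P k i : Euc d →ₗ[ℝ] Euc d) ⊓ V').map (fiberP P k i : Euc d →ₗ[ℝ] Euc d),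
      fun i hi1 hil => ?_, rfl⟩, ?_⟩
    · rintro x ⟨w, hw, rfl⟩
      exact ⟨w, rfl⟩
    · rw [TraceAux.dimlem ℓ k P hproj' hrange' hker' hℓ (hP1 k) (hPl k) V', hdim]
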